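/- arXiv:1702.08011 — 3 statements merged into one kernel-verified Lean document; each statement's English description precedes it below -/
import Mathlib

section
/- The deconcatenation coproduct Δ(α) = Σ_{α=β·γ} β⊗γ is an algebra homomorphism with respect to the quasi-shuffle product: Δ(α * β) = Δ(α) * Δ(β), where the product on the tensor square is componentwise quasi-shuffle. -/
/-- The quasi-shuffle product of two words over a commutative monoid `B`,
valued in the free `k`-module on words:
`∅*α = α*∅ = α` and `(a,α)*(b,β) = (a, α*(b,β)) + (b, (a,α)*β) + (a+b, α*β)`. -/
noncomputable def qs (k : Type*) [CommRing k] {B : Type*} [AddCommMonoid B] :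
    List B → List B → (List B →₀ k)
  | [], β => Finsupp.single β 1
  | α, [] => Finsupp.single α 1
  | a :: α, b :: β =>
      Finsupp.mapDomain (List.cons a) (qs k α (b :: β)) +
      Finsupp.mapDomain (List.cons b) (qs k (a :: α) β) +
      Finsupp.mapDomain (List.cons (a + b)) (qs k α β)
  termination_by α β => α.length + β.length

/-- The bilinear extension of the quasi-shuffle product to the free module. -/
noncomputable def qsMul {k : Type*} [CommRing k] {B : Type*} [AddCommMonoid B]
    (f g : List B →₀ k) : List B →₀ k :=
  f.sum fun α c => g.sum fun β d => (c * d) • qs k α β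

/-- The deconcatenation coproduct of a word, with the tensor square of the free
module on words modeled as the free module on pairs of words. -/
noncomputable def deconcat (k : Type*) [CommRing k] {B : Type*} (α : List B) :
    (List B × List B) →₀ k :=
  ∑ i ∈ Finset.range (α.length + 1), Finsupp.single (α.take i, α.drop i) 1

/-- The tensor product `f ⊗ g` of two elements of the free module on words,
modeled in the free module on pairs of words. -/
noncomputable def fprod {k : Type*} [CommRing k] {B : Type*}
    (f g : List B →₀ k) : (List B × List B) →₀ k :=
  f.sum fun a c => g.sum fun b d => (c * d) • Finsupp.single (a, b) 1

section Aux
set_option linter.unusedSectionVars false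
variable {k : Type*} [CommRing k] {B : Type*} [AddCommMonoid B]

lemma qs_nil_left (β : List B) : qs k [] β = Finsupp.single β 1 := by
  cases β <;> rw [qs]

lemma qs_nil_right (α : List B) : qs k α [] = Finsupp.single α 1 := by
  cases α <;> rw [qs] <;> simp

lemma qs_cons (a b : B) (α β : List B) :
    qs k (a :: α) (b :: β) = Finsupp.mapDomain (List.cons a) (qs k α (b :: β)) +
      Finsupp.mapDomain (List.cons b) (qs k (a :: α) β) +
      Finsupp.mapDomain (List.cons (a + b)) (qs k α β) := by
  rw [qs]

lemma fprod_add_left (f₁ f₂ g : List B →₀ k) :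
    fprod (f₁ + f₂) g = fprod f₁ g + fprod f₂ g := by
  unfold fprod
  rw [Finsupp.sum_add_index' (by simp) (by intro a b₁ b₂; rw [← Finsupp.sum_add]; simp [add_mul, add_smul])]

lemma fprod_single (x : List B) (c : k) (g : List B →₀ k) :
    fprod (Finsupp.single x c) g = c • Finsupp.mapDomain (fun b => (x, b)) g := by
  unfold fprod
  rw [Finsupp.sum_single_index (by simp), Finsupp.mapDomain, Finsupp.smul_sum]
  apply Finsupp.sum_congr
  intro b _
  simp [Finsupp.smul_single, mul_comm]

lemma fprod_mapDomain_cons (a : B) (f g : List B →₀ k) :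
    fprod (Finsupp.mapDomain (List.cons a) f) g =
      Finsupp.mapDomain (fun p : List B × List B => (a :: p.1, p.2)) (fprod f g) := by
  induction f using Finsupp.induction_linear with
  | zero => simp [fprod]
  | add f₁ f₂ h₁ h₂ =>
      rw [Finsupp.mapDomain_add, fprod_add_left, h₁, h₂, fprod_add_left, Finsupp.mapDomain_add]
  | single x c =>
      rw [Finsupp.mapDomain_single, fprod_single, fprod_single, Finsupp.mapDomain_smul,
        ← Finsupp.mapDomain_comp]
      rfl

end Aux

section Aux2
set_option linter.unusedSectionVars false
variable {k : Type*} [CommRing k] {B : Type*} [AddCommMonoid B]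

/-- linear extension of deconcat -/
noncomputable def Dmap (k : Type*) [CommRing k] {B : Type*} :
    (List B →₀ k) →ₗ[k] ((List B × List B) →₀ k) :=
  Finsupp.linearCombination k (deconcat k)

lemma Dmap_apply (f : List B →₀ k) :
    Dmap k f = f.sum fun γ c => c • deconcat k γ :=
  Finsupp.linearCombination_apply k f

lemma deconcat_cons (a : B) (γ : List B) :
    deconcat k (a :: γ) = Finsupp.single (([] : List B), a :: γ) 1 +
      Finsupp.mapDomain (fun p : List B × List B => (a :: p.1, p.2)) (deconcat k γ) := by
  unfold deconcat
  rw [Finsupp.mapDomain_finset_sum, List.length_cons, Finset.sum_range_succ']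
  simp only [Finsupp.mapDomain_single, List.take_succ_cons, List.drop_succ_cons,
    List.take_zero, List.drop_zero]
  rw [add_comm]

lemma Dmap_mapDomain_cons (a : B) (f : List B →₀ k) :
    Dmap k (Finsupp.mapDomain (List.cons a) f) =
      Finsupp.mapDomain (fun γ => (([] : List B), a :: γ)) f +
      Finsupp.mapDomain (fun p : List B × List B => (a :: p.1, p.2)) (Dmap k f) := by
  induction f using Finsupp.induction_linear with
  | zero => simp
  | add f₁ f₂ h₁ h₂ =>
      rw [Finsupp.mapDomain_add, map_add, h₁, h₂, map_add, Finsupp.mapDomain_add,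
        Finsupp.mapDomain_add]
      abel
  | single x c =>
      rw [Finsupp.mapDomain_single, Finsupp.mapDomain_single, Dmap_apply, Dmap_apply,
        Finsupp.sum_single_index (by simp), Finsupp.sum_single_index (by simp),
        deconcat_cons, smul_add, Finsupp.mapDomain_smul, Finsupp.smul_single, smul_eq_mul,
        mul_one]

/-- double-sum form of the RHS -/
noncomputable def Rr (k : Type*) [CommRing k] {B : Type*} [AddCommMonoid B] (α β : List B) :
    (List B × List B) →₀ k :=
  ∑ i ∈ Finset.range (α.length + 1), ∑ j ∈ Finset.range (β.length + 1),
    fprod (qs k (α.take i) (β.take j)) (qs k (α.drop i) (β.drop j))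

lemma rhs_eq (α β : List B) :
    ((deconcat k α).sum fun p c => (deconcat k β).sum fun q d =>
      (c * d) • fprod (qs k p.1 q.1) (qs k p.2 q.2)) = Rr k α β := by
  unfold deconcat Rr
  rw [← Finsupp.sum_finset_sum_index (by intro a; simp) (by intro p c₁ c₂; rw [← Finsupp.sum_add]; congr 1; funext q d; rw [add_mul, add_smul])]
  apply Finset.sum_congr rfl
  intro i _
  rw [Finsupp.sum_single_index (by simp)]
  rw [← Finsupp.sum_finset_sum_index (by intro a; simp) (by intro q d₁ d₂; rw [mul_add, add_smul])]
  apply Finset.sum_congr rfl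
  intro j _
  rw [Finsupp.sum_single_index (by simp), one_mul, one_smul]

end Aux2

section Aux3
set_option linter.unusedSectionVars false
variable {k : Type*} [CommRing k] {B : Type*} [AddCommMonoid B]

/-- left tensoring with letter c -/
noncomputable def Lc {k : Type*} [CommRing k] {B : Type*} (c : B)
    (f : (List B × List B) →₀ k) : (List B × List B) →₀ k :=
  Finsupp.mapDomain (fun p : List B × List B => (c :: p.1, p.2)) f

lemma fprod_cons_cons (a b : B) (u w v x : List B) :
    fprod (qs k (a :: u) (b :: w)) (qs k v x) =
      Lc a (fprod (qs k u (b :: w)) (qs k v x)) +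
      Lc b (fprod (qs k (a :: u) w) (qs k v x)) +
      Lc (a + b) (fprod (qs k u w) (qs k v x)) := by
  rw [qs_cons, fprod_add_left, fprod_add_left, Lc, Lc, Lc,
    fprod_mapDomain_cons, fprod_mapDomain_cons, fprod_mapDomain_cons]

lemma fprod_cons_nil (a : B) (u : List B) (g : List B →₀ k) :
    fprod (qs k (a :: u) []) g = Lc a (fprod (qs k u []) g) := by
  rw [qs_nil_right, qs_nil_right, ← Finsupp.mapDomain_single, Lc, fprod_mapDomain_cons]

lemma fprod_nil_cons (b : B) (w : List B) (g : List B →₀ k) :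
    fprod (qs k [] (b :: w)) g = Lc b (fprod (qs k [] w) g) := by
  rw [qs_nil_left, qs_nil_left, ← Finsupp.mapDomain_single, Lc, fprod_mapDomain_cons]

lemma fprod_nil_nil (g : List B →₀ k) :
    fprod (qs k ([] : List B) []) g =
      Finsupp.mapDomain (fun γ : List B => (([] : List B), γ)) g := by
  rw [qs_nil_left, fprod_single, one_smul]

lemma Lc_add (c : B) (f g : (List B × List B) →₀ k) : Lc c (f + g) = Lc c f + Lc c g :=
  Finsupp.mapDomain_add

lemma Lc_sum {ι : Type*} (c : B) (s : Finset ι) (f : ι → (List B × List B) →₀ k) :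
    Lc c (∑ i ∈ s, f i) = ∑ i ∈ s, Lc c (f i) :=
  Finsupp.mapDomain_finset_sum

end Aux3

section Aux4
set_option linter.unusedSectionVars false
variable {k : Type*} [CommRing k] {B : Type*} [AddCommMonoid B]

lemma Rr_cons (a b : B) (α β : List B) :
    Rr k (a :: α) (b :: β) =
      Finsupp.mapDomain (fun γ : List B => (([] : List B), γ)) (qs k (a :: α) (b :: β)) +
      Lc a (Rr k α (b :: β)) + Lc b (Rr k (a :: α) β) + Lc (a + b) (Rr k α β) := by
  have hA : Lc a (Rr k α (b :: β)) =
      ∑ i ∈ Finset.range (α.length + 1), ∑ j ∈ Finset.range (β.length + 1),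
        Lc a (fprod (qs k (α.take i) (b :: β.take j)) (qs k (α.drop i) (β.drop j))) +
      ∑ i ∈ Finset.range (α.length + 1),
        Lc a (fprod (qs k (α.take i) []) (qs k (α.drop i) (b :: β))) := by
    rw [Rr, Lc_sum, ← Finset.sum_add_distrib]
    refine Finset.sum_congr rfl fun i _ => ?_
    rw [Lc_sum, List.length_cons, Finset.sum_range_succ']
    simp only [List.take_succ_cons, List.drop_succ_cons, List.take_zero, List.drop_zero]
  have hB : Lc b (Rr k (a :: α) β) =
      ∑ i ∈ Finset.range (α.length + 1), ∑ j ∈ Finset.range (β.length + 1),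
        Lc b (fprod (qs k (a :: α.take i) (β.take j)) (qs k (α.drop i) (β.drop j))) +
      ∑ j ∈ Finset.range (β.length + 1),
        Lc b (fprod (qs k [] (β.take j)) (qs k (a :: α) (β.drop j))) := by
    rw [Rr, Lc_sum, List.length_cons, Finset.sum_range_succ']
    congr 1
    refine Finset.sum_congr rfl fun i _ => ?_
    · rw [Lc_sum]
      simp only [List.take_succ_cons, List.drop_succ_cons]
    · rw [Lc_sum]
      simp only [List.take_zero, List.drop_zero]
  have hC : Lc (a + b) (Rr k α β) =
      ∑ i ∈ Finset.range (α.length + 1), ∑ j ∈ Finset.range (β.length + 1),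
        Lc (a + b) (fprod (qs k (α.take i) (β.take j)) (qs k (α.drop i) (β.drop j))) := by
    rw [Rr, Lc_sum]
    exact Finset.sum_congr rfl fun i _ => Lc_sum _ _ _
  rw [hA, hB, hC]
  rw [Rr, List.length_cons, List.length_cons, Finset.sum_range_succ']
  have h1 : ∀ i ∈ Finset.range (α.length + 1),
      (∑ j ∈ Finset.range (β.length + 1 + 1),
        fprod (qs k ((a :: α).take (i + 1)) ((b :: β).take j))
          (qs k ((a :: α).drop (i + 1)) ((b :: β).drop j))) =
      (∑ j ∈ Finset.range (β.length + 1),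
        (Lc a (fprod (qs k (α.take i) (b :: β.take j)) (qs k (α.drop i) (β.drop j))) +
         Lc b (fprod (qs k (a :: α.take i) (β.take j)) (qs k (α.drop i) (β.drop j))) +
         Lc (a + b) (fprod (qs k (α.take i) (β.take j)) (qs k (α.drop i) (β.drop j))))) +
      Lc a (fprod (qs k (α.take i) []) (qs k (α.drop i) (b :: β))) := by
    intro i _
    rw [Finset.sum_range_succ']
    congr 1
    · refine Finset.sum_congr rfl fun j _ => ?_
      simp only [List.take_succ_cons, List.drop_succ_cons]
      exact fprod_cons_cons a b _ _ _ _
    · simp only [List.take_succ_cons, List.drop_succ_cons, List.take_zero, List.drop_zero]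
      exact fprod_cons_nil a _ _
  have h2 : (∑ j ∈ Finset.range (β.length + 1 + 1),
      fprod (qs k ((a :: α).take 0) ((b :: β).take j))
        (qs k ((a :: α).drop 0) ((b :: β).drop j))) =
      (∑ j ∈ Finset.range (β.length + 1),
        Lc b (fprod (qs k [] (β.take j)) (qs k (a :: α) (β.drop j)))) +
      Finsupp.mapDomain (fun γ : List B => (([] : List B), γ)) (qs k (a :: α) (b :: β)) := by
    rw [Finset.sum_range_succ']
    congr 1
    · refine Finset.sum_congr rfl fun j _ => ?_
      simp only [List.take_succ_cons, List.drop_succ_cons, List.take_zero, List.drop_zero]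
      exact fprod_nil_cons b _ _
    · simp only [List.take_zero, List.drop_zero]
      exact fprod_nil_nil _
  rw [Finset.sum_congr rfl h1, h2]
  simp only [Finset.sum_add_distrib]
  abel

end Aux4

section Main
set_option linter.unusedSectionVars false
variable {k : Type*} [CommRing k] {B : Type*} [AddCommMonoid B]

lemma Dmap_qs : ∀ (α β : List B), Dmap k (qs k α β) = Rr k α β
  | [], β => by
      rw [qs_nil_left, Dmap_apply, Finsupp.sum_single_index (by simp), one_smul]
      rw [Rr]
      simp only [List.length_nil, zero_add, Finset.sum_range_one, List.take_nil,
        List.drop_nil, qs_nil_left, fprod_single, one_smul, Finsupp.mapDomain_single,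
        List.take_zero, List.drop_zero]
      rw [deconcat]
  | a :: α, [] => by
      rw [qs_nil_right, Dmap_apply, Finsupp.sum_single_index (by simp), one_smul]
      rw [Rr]
      simp only [List.length_nil, zero_add, Finset.sum_range_one, List.take_nil,
        List.drop_nil, qs_nil_right, fprod_single, one_smul, Finsupp.mapDomain_single,
        List.take_zero, List.drop_zero]
      rw [deconcat]
  | a :: α, b :: β => by
      have ih1 := Dmap_qs α (b :: β)
      have ih2 := Dmap_qs (a :: α) β
      have ih3 := Dmap_qs α β
      rw [qs_cons, map_add, map_add, Dmap_mapDomain_cons, Dmap_mapDomain_cons,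
        Dmap_mapDomain_cons, ih1, ih2, ih3, Rr_cons]
      have hE : Finsupp.mapDomain (fun γ : List B => (([] : List B), γ))
            (qs k (a :: α) (b :: β)) =
          Finsupp.mapDomain (fun γ : List B => (([] : List B), a :: γ)) (qs k α (b :: β)) +
          Finsupp.mapDomain (fun γ : List B => (([] : List B), b :: γ)) (qs k (a :: α) β) +
          Finsupp.mapDomain (fun γ : List B => (([] : List B), (a + b) :: γ)) (qs k α β) := by
        rw [qs_cons, Finsupp.mapDomain_add, Finsupp.mapDomain_add,
          ← Finsupp.mapDomain_comp, ← Finsupp.mapDomain_comp, ← Finsupp.mapDomain_comp]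
        rfl
      rw [hE, Lc, Lc, Lc]
      abel
  termination_by α β => α.length + β.length

end Main

/-- The deconcatenation coproduct is multiplicative with respect to the
quasi-shuffle product: `Δ(α * β) = Δ(α) * Δ(β)`, where the product on the
tensor square is the componentwise quasi-shuffle product. -/
theorem stmt_9 (k : Type*) [CommRing k] {B : Type*} [AddCommMonoid B]
    (α β : List B) :
    ((qs k α β).sum fun γ c => c • deconcat k γ) =
    ((deconcat k α).sum fun p c => (deconcat k β).sum fun q d =>
      (c * d) • fprod (qs k p.1 q.1) (qs k p.2 q.2)) := by
  rw [← Dmap_apply, rhs_eq, Dmap_qs]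
end

section
/- In the quasi-shuffle Hopf algebra of words over Ñ∖{0}, the antipode of the word ε^n (n copies of ε) is S(ε^n) = (−1)^n Σ_{i=0}^{n−1} C(n−1,i) · ε^{i+1}. -/
/-- The antipode of the quasi-shuffle Hopf algebra:
`S(α) = (−1)^{ℓ(α)} ∑_{J ⊨ ℓ(α)} J∘(α^r)`. -/
noncomputable def qsAntipode (k : Type*) [CommRing k] {B : Type*} [AddCommMonoid B]
    (α : List B) : List B →₀ k :=
  (-1 : k) ^ α.length •
    ∑ J : Composition α.length,
      Finsupp.single ((α.reverse.splitWrtComposition J).map List.sum) 1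

lemma memEquiv (n : ℕ) (c : CompositionAsSet n) (i : Fin (n-1)) :
    i ∈ compositionAsSetEquiv n c ↔ (⟨1 + i, by
      apply (Nat.add_lt_add_left i.is_lt 1).trans_le
      rw [Nat.succ_eq_add_one, add_comm]
      exact add_le_add (Nat.sub_le n 1) (le_refl 1)⟩ : Fin n.succ) ∈ c.boundaries := by
  simp [compositionAsSetEquiv]

lemma cardEquiv (n : ℕ) (hn : 0 < n) (c : CompositionAsSet n) :
    (compositionAsSetEquiv n c).card + 2 = c.boundaries.card := by
  have h0 : (0 : Fin n.succ) ∈ c.boundaries := c.zero_mem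
  have hl : (Fin.last n) ∈ c.boundaries := c.getLast_mem
  have hne : (Fin.last n) ≠ (0 : Fin n.succ) := by
    simp [Fin.ext_iff, hn.ne']
  have key : (compositionAsSetEquiv n c).card =
      ((c.boundaries.erase 0).erase (Fin.last n)).card := by
    apply Finset.card_bij (fun i _ => (⟨1 + i.1, by
      apply (Nat.add_lt_add_left i.is_lt 1).trans_le
      rw [Nat.succ_eq_add_one, add_comm]
      exact add_le_add (Nat.sub_le n 1) (le_refl 1)⟩ : Fin n.succ))
    · intro i hi
      rw [memEquiv] at hi
      rw [Finset.mem_erase, Finset.mem_erase]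
      refine ⟨?_, ?_, hi⟩
      · simp only [Fin.ext_iff, Fin.val_last, ne_eq]
        have : (i : ℕ) < n - 1 := i.is_lt
        omega
      · simp [Fin.ext_iff]
    · intro i _ j _ h
      simp only [Fin.ext_iff] at h ⊢
      omega
    · intro j hj
      rw [Finset.mem_erase, Finset.mem_erase] at hj
      obtain ⟨hjl, hj0, hjb⟩ := hj
      have hj0' : (j : ℕ) ≠ 0 := fun h => hj0 (Fin.ext h)
      have hjl' : (j : ℕ) ≠ n := fun h => hjl (Fin.ext h)
      have hjn : (j : ℕ) < n + 1 := j.is_lt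
      refine ⟨⟨(j : ℕ) - 1, by omega⟩, ?_, ?_⟩
      · rw [memEquiv]
        convert hjb using 2
        simp only
        omega
      · simp [Fin.ext_iff]; omega
  rw [key, Finset.card_erase_of_mem, Finset.card_erase_of_mem h0]
  · have h2 : 2 ≤ c.boundaries.card := Finset.one_lt_card.mpr ⟨_, hl, _, h0, hne⟩
    omega
  · exact Finset.mem_erase.mpr ⟨hne, hl⟩

lemma lengthEquiv (n : ℕ) (hn : 0 < n) (J : Composition n) :
    (compositionAsSetEquiv n (compositionEquiv n J)).card + 1 = J.length := by
  have := cardEquiv n hn (compositionEquiv n J)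
  have h2 : (compositionEquiv n J).boundaries.card = J.length + 1 := by
    show J.toCompositionAsSet.boundaries.card = J.length + 1
    rw [J.toCompositionAsSet.card_boundaries_eq_succ_length, J.toCompositionAsSet_length]
  omega

lemma splitRep (n : ℕ) (J : Composition ((List.replicate n (0:ℕ)).length)) :
    (((List.replicate n (0:ℕ)).reverse.splitWrtComposition J).map List.sum) =
      List.replicate J.length (0 : ℕ) := by
  rw [List.reverse_replicate]
  rw [List.eq_replicate_iff]
  refine ⟨by simp [List.length_splitWrtComposition], ?_⟩
  intro x hx
  simp only [List.mem_map] at hx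
  obtain ⟨l, hl, rfl⟩ := hx
  have hjoin := List.flatten_splitWrtComposition (List.replicate n (0:ℕ)) J
  have : ∀ a ∈ l, a = 0 := by
    intro a ha
    have : a ∈ List.replicate n (0:ℕ) := by
      rw [← hjoin]
      exact List.mem_flatten.mpr ⟨l, hl, ha⟩
    exact List.eq_of_mem_replicate this
  rw [List.eq_replicate_of_mem this]
  simp

/-- In the quasi-shuffle Hopf algebra of words over `Ñ∖{0}` (identified with
`(ℕ,+)` via `θ`, so `ε` is `0`), the antipode of the word `ε^n` is
`S(ε^n) = (−1)^n ∑_{i=0}^{n−1} C(n−1,i) ε^{i+1}`. -/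
theorem stmt_16 (k : Type*) [CommRing k] (n : ℕ) (hn : 0 < n) :
    qsAntipode k (List.replicate n (0 : ℕ)) =
      (-1 : k) ^ n • ∑ i ∈ Finset.range n,
        ((n - 1).choose i : k) • Finsupp.single (List.replicate (i + 1) (0 : ℕ)) 1 := by
  rw [qsAntipode]
  have hsplit : ∀ J : Composition ((List.replicate n (0:ℕ)).length),
      Finsupp.single ((((List.replicate n (0:ℕ)).reverse.splitWrtComposition J).map List.sum))
        (1 : k) = Finsupp.single (List.replicate J.length (0:ℕ)) 1 := by
    intro J; rw [splitRep]
  simp only [hsplit]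
  rw [show (List.replicate n (0:ℕ)).length = n from by simp]
  congr 1
  -- now: ∑ J : Composition n, single (replicate J.length 0) 1 = ∑ i in range n, ...
  let e : Composition n ≃ Finset (Fin (n - 1)) :=
    (compositionEquiv n).trans (compositionAsSetEquiv n)
  have hlen : ∀ J : Composition n, J.length = (e J).card + 1 :=
    fun J => (lengthEquiv n hn J).symm
  rw [show (∑ J : Composition n,
        Finsupp.single (List.replicate J.length (0:ℕ)) (1:k)) =
      ∑ s : Finset (Fin (n - 1)),
        Finsupp.single (List.replicate (s.card + 1) (0:ℕ)) (1:k) from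
    Fintype.sum_equiv e _ _ (fun J => by rw [hlen J])]
  rw [← Finset.sum_fiberwise_of_maps_to
    (g := fun s : Finset (Fin (n - 1)) => s.card)
    (t := Finset.range n)
    (fun s _ => Finset.mem_range.mpr (by
      show s.card < n
      have := Finset.card_le_card (Finset.subset_univ s)
      simp only [Finset.card_univ, Fintype.card_fin] at this
      omega))]
  refine Finset.sum_congr rfl fun i _ => ?_
  have hfe : Finset.univ.filter (fun s : Finset (Fin (n-1)) => s.card = i) =
      Finset.powersetCard i Finset.univ := by
    ext s; simp [Finset.mem_powersetCard_univ]
  rw [Finset.sum_congr rfl (fun s hs => by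
        rw [(Finset.mem_filter.mp hs).2]),
    Finset.sum_const, hfe, Finset.card_powersetCard, Finset.card_univ, Fintype.card_fin,
    Nat.cast_smul_eq_nsmul k]
end

section
/- The map φ (as above) is a coalgebra homomorphism with respect to the deconcatenation coproducts: Δ∘φ = (φ⊗φ)∘Δ and ε_counit∘φ = ε_counit, where Δ(α) = Σ_{α=β·γ} β⊗γ. -/
/-- The map `φ` on words over the monoid `Ñ∖{0}` (identified with `(ℕ,+)` via
the isomorphism `θ` sending `ε` to `0`, so that `ε`-entries are `0`-entries):
`φ(α) = (−1)^{ℓ_ε(α)} ᾱ` if `α` is empty or its first entry is a positive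
integer, and `φ(α) = 0` if the first entry is `ε`; here `ℓ_ε(α)` is the number
of `ε`-entries and `ᾱ` deletes all `ε`-entries (yielding a word over `ℙ`). -/
noncomputable def phi (k : Type*) [CommRing k] (α : List ℕ) : List ℕ →₀ k :=
  if α.head? = some 0 then 0
  else (-1 : k) ^ (α.count 0) • Finsupp.single (α.filter (· ≠ 0)) 1

section Aux
variable (k : Type*) [CommRing k]

/-- `phi` without the head check. -/
noncomputable def psi (α : List ℕ) : List ℕ →₀ k :=
  (-1 : k) ^ (α.count 0) • Finsupp.single (α.filter (· ≠ 0)) 1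

lemma phi_eq_psi {α : List ℕ} (h : α.head? ≠ some 0) : phi k α = psi k α := by
  simp [phi, psi, h]

lemma phi_cons_zero (α : List ℕ) : phi k (0 :: α) = 0 := by simp [phi]

lemma psi_eq_single (α : List ℕ) :
    psi k α = Finsupp.single (α.filter (· ≠ 0)) ((-1 : k) ^ (α.count 0)) := by
  simp [psi, Finsupp.smul_single']

lemma psi_cons_zero (α : List ℕ) : psi k (0 :: α) = -psi k α := by
  simp [psi, pow_succ, List.count_cons]

lemma psi_cons_pos {a : ℕ} (ha : a ≠ 0) (α : List ℕ) :
    psi k (a :: α) = Finsupp.single (a :: α.filter (· ≠ 0)) ((-1 : k) ^ (α.count 0)) := by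
  rw [psi_eq_single]
  simp [List.count_cons, Ne.symm ha, List.filter_cons, ha]

variable {k}

lemma fprod_single_left {B : Type*} (x : List B) (c : k) (g : List B →₀ k) :
    fprod (Finsupp.single x c) g = g.sum fun b d => (c * d) • Finsupp.single (x, b) 1 := by
  rw [fprod, Finsupp.sum_single_index]
  simp [Finsupp.sum, Finset.sum_const_zero]

lemma fprod_zero_left {B : Type*} (g : List B →₀ k) : fprod (0 : List B →₀ k) g = 0 := by
  simp [fprod, Finsupp.sum_zero_index]

lemma fprod_zero_right {B : Type*} (f : List B →₀ k) : fprod f (0 : List B →₀ k) = 0 := by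
  simp [fprod, Finsupp.sum_zero_index, Finsupp.sum, Finset.sum_const_zero]

lemma fprod_single_single {B : Type*} (x y : List B) (c d : k) :
    fprod (Finsupp.single x c) (Finsupp.single y d) = (c * d) • Finsupp.single (x, y) 1 := by
  rw [fprod_single_left, Finsupp.sum_single_index]
  simp

end Aux

section
variable {k : Type*} [CommRing k]

/-- prepend `a` on the left component. -/
noncomputable def preL {B : Type*} (a : B) (f : (List B × List B) →₀ k) :
    (List B × List B) →₀ k :=
  Finsupp.mapDomain (fun p => (a :: p.1, p.2)) f

lemma preL_single {B : Type*} (a : B) (x y : List B) (c : k) :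
    preL a (Finsupp.single (x, y) c) = Finsupp.single (a :: x, y) c := by
  simp [preL, Finsupp.mapDomain_single]

lemma preL_smul {B : Type*} (a : B) (c : k) (f : (List B × List B) →₀ k) :
    preL a (c • f) = c • preL a f := Finsupp.mapDomain_smul c f

lemma preL_finsupp_sum {B C : Type*} (a : B) (g : List C →₀ k)
    (v : List C → k → (List B × List B) →₀ k) :
    preL a (g.sum v) = g.sum fun b d => preL a (v b d) := by
  simp only [preL]
  exact map_finsuppSum (Finsupp.mapDomain.addMonoidHom
    (fun p : List B × List B => (a :: p.1, p.2)) (M := k)) _ _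

lemma deconcat_cons_s19 {B : Type*} (a : B) (α : List B) :
    deconcat k (a :: α) = Finsupp.single (([] : List B), a :: α) 1 + preL a (deconcat k α) := by
  rw [deconcat, Finset.sum_range_succ']
  simp only [List.take_succ_cons, List.drop_succ_cons, List.take_zero, List.drop_zero,
    List.length_cons]
  rw [add_comm, deconcat, preL, Finsupp.mapDomain_finset_sum]
  simp [Finsupp.mapDomain_single]

end

section Key
variable {k : Type*} [CommRing k]

lemma fprod_sum_neg {B : Type*} (x : List B) (c : k) (g : List B →₀ k) :
    fprod (Finsupp.single x (-c)) g = -fprod (Finsupp.single x c) g := by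
  rw [fprod_single_left, fprod_single_left, Finsupp.sum, Finsupp.sum,
    ← Finset.sum_neg_distrib]
  exact Finset.sum_congr rfl fun b _ => by rw [neg_mul, neg_smul]

lemma key_lemma : ∀ α : List ℕ,
    ∑ i ∈ Finset.range (α.length + 1), fprod (psi k (α.take i)) (phi k (α.drop i)) =
      (-1 : k) ^ (α.count 0) • deconcat k (α.filter (· ≠ 0)) := by
  intro α
  induction α with
  | nil =>
      simp only [List.length_nil, Finset.range_one, Finset.sum_singleton, List.take_nil,
        List.drop_nil, List.count_nil, pow_zero, one_smul, List.filter_nil]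
      rw [phi_eq_psi k (by simp), psi_eq_single]
      simp only [List.filter_nil, List.count_nil, pow_zero]
      rw [fprod_single_single]
      simp [deconcat]
  | cons a α ih =>
      rw [List.length_cons, Finset.sum_range_succ']
      simp only [List.take_succ_cons, List.drop_succ_cons, List.take_zero, List.drop_zero]
      by_cases ha : a = 0
      · subst ha
        rw [phi_cons_zero, fprod_zero_right, add_zero]
        have hsum : ∑ i ∈ Finset.range (α.length + 1),
            fprod (psi k ((0 : ℕ) :: α.take i)) (phi k (α.drop i)) =
            -((-1 : k) ^ (α.count 0) • deconcat k (α.filter (· ≠ 0))) := by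
          rw [← ih, ← Finset.sum_neg_distrib]
          refine Finset.sum_congr rfl fun i _ => ?_
          rw [psi_cons_zero, psi_eq_single]
          rw [show -Finsupp.single ((α.take i).filter (· ≠ 0))
              ((-1 : k) ^ ((α.take i).count 0)) =
              Finsupp.single ((α.take i).filter (· ≠ 0))
              (-((-1 : k) ^ ((α.take i).count 0))) by rw [Finsupp.single_neg]]
          rw [fprod_sum_neg]
        rw [hsum, show ((0:ℕ)::α).count 0 = α.count 0 + 1 by simp [List.count_cons],
          show ((0:ℕ)::α).filter (· ≠ 0) = α.filter (· ≠ 0) by simp,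
          pow_succ, mul_neg_one, neg_smul]
      · -- a ≠ 0
        have hphi : phi k (a :: α) = Finsupp.single (a :: α.filter (· ≠ 0))
            ((-1 : k) ^ (α.count 0)) := by
          rw [phi_eq_psi k (by simp [ha]), psi_cons_pos k ha]
        have h0 : fprod (psi k ([] : List ℕ)) (phi k (a :: α)) =
            (-1 : k) ^ (α.count 0) • Finsupp.single (([] : List ℕ), a :: α.filter (· ≠ 0)) 1 := by
          rw [psi_eq_single, hphi]
          simp only [List.filter_nil, List.count_nil, pow_zero]
          rw [fprod_single_single, one_mul]
        have h2 : ∀ i, fprod (psi k (a :: α.take i)) (phi k (α.drop i)) =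
            preL a (fprod (psi k (α.take i)) (phi k (α.drop i))) := by
          intro i
          rw [psi_cons_pos k ha, psi_eq_single, fprod_single_left, fprod_single_left,
            preL_finsupp_sum]
          refine Finsupp.sum_congr fun b hb => ?_
          rw [preL_smul, preL_single]
        rw [h0, Finset.sum_congr rfl fun i _ => h2 i,
          show (∑ i ∈ Finset.range (α.length + 1),
              preL a (fprod (psi k (α.take i)) (phi k (α.drop i)))) =
            preL a (∑ i ∈ Finset.range (α.length + 1),
              fprod (psi k (α.take i)) (phi k (α.drop i))) from
            (map_sum (Finsupp.mapDomain.addMonoidHom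
              (fun p : List ℕ × List ℕ => (a :: p.1, p.2)) (M := k)) _ _).symm,
          ih, preL_smul, ← smul_add, add_comm]
        rw [show ((a:ℕ)::α).count 0 = α.count 0 by simp [List.count_cons, Ne.symm ha, ha],
          show ((a:ℕ)::α).filter (· ≠ 0) = a :: α.filter (· ≠ 0) by
            simp [List.filter_cons, ha],
          deconcat_cons_s19]

end Key


open scoped Classical in
/-- `φ` is a coalgebra homomorphism for the deconcatenation coproducts:
`Δ∘φ = (φ⊗φ)∘Δ` and `ε_counit∘φ = ε_counit`. -/
theorem stmt_19 (k : Type*) [CommRing k] :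
    (∀ α : List ℕ,
      ((phi k α).sum fun γ c => c • deconcat k γ) =
      ∑ i ∈ Finset.range (α.length + 1), fprod (phi k (α.take i)) (phi k (α.drop i))) ∧
    (∀ α : List ℕ,
      ((phi k α).sum fun γ c => c * (if γ = [] then (1 : k) else 0)) =
      (if α = [] then (1 : k) else 0)) := by
  constructor
  · intro α
    by_cases h : α.head? = some 0
    · obtain ⟨t, rfl⟩ : ∃ t, α = 0 :: t := by
        cases α with
        | nil => simp at h
        | cons a t =>
          simp only [List.head?_cons, Option.some.injEq] at h
          exact ⟨t, by rw [h]⟩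
      rw [phi_cons_zero, Finsupp.sum_zero_index]
      rw [List.length_cons, Finset.sum_range_succ']
      simp only [List.take_succ_cons, List.drop_succ_cons, List.take_zero, List.drop_zero]
      rw [phi_cons_zero, fprod_zero_right, add_zero]
      symm
      refine Finset.sum_eq_zero fun i _ => ?_
      rw [phi_cons_zero, fprod_zero_left]
    · have htake : ∀ i, phi k (α.take i) = psi k (α.take i) := by
        intro i; apply phi_eq_psi
        cases α with
        | nil => simp
        | cons a t =>
          cases i with
          | zero => simp
          | succ j => simpa using h
      rw [Finset.sum_congr rfl fun i _ => by rw [htake i], key_lemma,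
        phi_eq_psi k h, psi_eq_single, Finsupp.sum_single_index (by simp)]
  · intro α
    cases α with
    | nil =>
        rw [show phi k ([] : List ℕ) = Finsupp.single ([] : List ℕ) (1 : k) by simp [phi],
          Finsupp.sum_single_index (by simp)]
        simp
    | cons a t =>
        by_cases ha : a = 0
        · subst ha
          rw [phi_cons_zero, Finsupp.sum_zero_index]
          simp
        · rw [phi_eq_psi k (by simp [ha]), psi_cons_pos k ha,
            Finsupp.sum_single_index (by simp)]
          simp
end
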